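/- arXiv:1504.08297 — 2 statements merged into one kernel-verified Lean document; each statement's English description precedes it below -/
import Mathlib

section
/- Let E be a finite-dimensional real normed vector space, U ⊆ E an open set, and A : U → (E →L[ℝ] Mₙ(ℝ)) an Mₙ(ℝ)-valued 1-form on U. For a differentiable map γ : U → GLₙ(ℝ) define A^γ(x)(v) := γ(x)⁻¹ A(x)(v) γ(x) + γ(x)⁻¹ (Dγ)(x)(v). Then for any differentiable maps γ, u : U → GLₙ(ℝ), one has (A^γ)^{γ⁻¹u} = A^u, where γ⁻¹u denotes the pointwise product x ↦ γ(x)⁻¹u(x). In other words, if a dressing field u transforms under the gauge transformation γ as u ↦ γ⁻¹u, then the composite (dressed) field A^u is invariant under the gauge transformation by γ. -/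
open Matrix ContinuousLinearMap

attribute [local instance] Matrix.linftyOpNormedAddCommGroup Matrix.linftyOpNormedRing
  Matrix.linftyOpNormedAlgebra

noncomputable section

variable {E : Type*} [NormedAddCommGroup E] [NormedSpace ℝ E]

lemma dressing_key {R : Type*} [Ring R] (g gi uu ui a dG dGi dU : R)
    (h1 : g * gi = 1) (h2 : gi * g = 1) (h4 : ui * uu = 1)
    (hrel : dGi * g + gi * dG = 0) :
    (ui * g) * ((gi * (a * g + dG)) * (gi * uu) + (gi * dU + dGi * uu))
      = ui * (a * uu + dU) := by
  have hdGi : dGi = -(gi * dG * gi) := by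
    have h5 : dGi * g = -(gi * dG) := eq_neg_of_add_eq_zero_left hrel
    calc dGi = dGi * g * gi := by rw [mul_assoc, h1, mul_one]
      _ = -(gi * dG * gi) := by rw [h5, neg_mul]
  subst hdGi
  have c1 : ∀ x : R, g * (gi * x) = x := fun x => by rw [← mul_assoc, h1, one_mul]
  have c2 : ∀ x : R, gi * (g * x) = x := fun x => by rw [← mul_assoc, h2, one_mul]
  simp only [mul_add, add_mul, mul_assoc, neg_mul, mul_neg, c1, c2]
  abel

/-- The gauge transform `A^γ` of an `Mₙ(ℝ)`-valued 1-form `A` by an invertible-matrix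
valued map `γ`: `A^γ(x)(v) = γ(x)⁻¹ A(x)(v) γ(x) + γ(x)⁻¹ (Dγ)(x)(v)`. -/
def gaugeT {n : ℕ} (A : E → (E →L[ℝ] Matrix (Fin n) (Fin n) ℝ))
    (γ : E → GL (Fin n) ℝ) : E → (E →L[ℝ] Matrix (Fin n) (Fin n) ℝ) :=
  fun x =>
    (ContinuousLinearMap.mul ℝ (Matrix (Fin n) (Fin n) ℝ) (↑(γ x)⁻¹ : Matrix (Fin n) (Fin n) ℝ)).comp
      ((show E →L[ℝ] Matrix (Fin n) (Fin n) ℝ from ((ContinuousLinearMap.mul ℝ (Matrix (Fin n) (Fin n) ℝ)).flip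
          ((γ x : Matrix (Fin n) (Fin n) ℝ))).comp (A x))
        + fderiv ℝ (fun y => (γ y : Matrix (Fin n) (Fin n) ℝ)) x)

/-- If a dressing field `u` transforms under the gauge transformation `γ` as `u ↦ γ⁻¹u`,
then the composite (dressed) field `A^u` is invariant under the gauge transformation
by `γ`: `(A^γ)^{γ⁻¹u} = A^u` on `U`. -/
theorem stmt_1 [FiniteDimensional ℝ E] {n : ℕ} (U : Set E) (hU : IsOpen U)
    (A : E → (E →L[ℝ] Matrix (Fin n) (Fin n) ℝ)) (γ u : E → GL (Fin n) ℝ)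
    (hγ : ∀ x ∈ U, DifferentiableAt ℝ (fun y => (γ y : Matrix (Fin n) (Fin n) ℝ)) x)
    (hu : ∀ x ∈ U, DifferentiableAt ℝ (fun y => (u y : Matrix (Fin n) (Fin n) ℝ)) x) :
    ∀ x ∈ U, ∀ v : E,
      gaugeT (gaugeT A γ) (fun y => (γ y)⁻¹ * u y) x v = gaugeT A u x v := by
  intro x hx v
  set M := Matrix (Fin n) (Fin n) ℝ
  have hg := hγ x hx
  have hu' := hu x hx
  -- differentiability of the pointwise inverse
  have hinv_eq : (fun y => (((γ y)⁻¹ : GL (Fin n) ℝ) : M))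
      = fun y => Ring.inverse ((γ y : M)) := by
    funext y; rw [Ring.inverse_unit]
  have hgi : DifferentiableAt ℝ (fun y => (((γ y)⁻¹ : GL (Fin n) ℝ) : M)) x := by
    rw [hinv_eq]; exact hg.inverse (γ x).isUnit
  -- the product function
  have hprodfun : (fun y => (((γ y)⁻¹ * u y : GL (Fin n) ℝ) : M))
      = fun y => (((γ y)⁻¹ : GL (Fin n) ℝ) : M) * ((u y : M)) := by
    funext y; rfl
  -- derivative relation for the inverse
  have hrel : ∀ w : E,
      fderiv ℝ (fun y => (((γ y)⁻¹ : GL (Fin n) ℝ) : M)) x w * (γ x : M)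
        + (((γ x)⁻¹ : GL (Fin n) ℝ) : M) * fderiv ℝ (fun y => (γ y : M)) x w = 0 := by
    intro w
    have hone : (fun y => (((γ y)⁻¹ : GL (Fin n) ℝ) : M) * (γ y : M)) = fun _ => (1 : M) := by
      funext y
      exact Units.inv_mul (γ y)
    have h0 : fderiv ℝ (fun y => (((γ y)⁻¹ : GL (Fin n) ℝ) : M) * (γ y : M)) x = 0 := by
      rw [hone]; exact fderiv_const_apply _
    erw [fderiv_fun_mul' hgi hg] at h0
    have := congrFun (congrArg (DFunLike.coe) h0) w
    rw [add_comm]; exact this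
  -- derivative of the product
  have hprod : ∀ w : E,
      fderiv ℝ (fun y => (((γ y)⁻¹ * u y : GL (Fin n) ℝ) : M)) x w
        = (((γ x)⁻¹ : GL (Fin n) ℝ) : M) * fderiv ℝ (fun y => (u y : M)) x w
          + fderiv ℝ (fun y => (((γ y)⁻¹ : GL (Fin n) ℝ) : M)) x w * (u x : M) := by
    intro w
    rw [hprodfun]; erw [fderiv_fun_mul' hgi hu']
    rfl
  simp only [gaugeT, ContinuousLinearMap.comp_apply, ContinuousLinearMap.add_apply,
    ContinuousLinearMap.mul_apply', ContinuousLinearMap.flip_apply, hprod v]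
  have hcoe : (((((γ x)⁻¹ * u x : GL (Fin n) ℝ))⁻¹ : GL (Fin n) ℝ) : M)
      = (((u x)⁻¹ : GL (Fin n) ℝ) : M) * ((γ x : M)) := by
    rw [_root_.mul_inv_rev, inv_inv, Units.val_mul]
  rw [hcoe]
  have := dressing_key ((γ x : M)) (((γ x)⁻¹ : GL (Fin n) ℝ) : M) ((u x : M))
    (((u x)⁻¹ : GL (Fin n) ℝ) : M) (A x v) (fderiv ℝ (fun y => (γ y : M)) x v)
    (fderiv ℝ (fun y => (((γ y)⁻¹ : GL (Fin n) ℝ) : M)) x v)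
    (fderiv ℝ (fun y => (u y : M)) x v)
    (Units.mul_inv (γ x))
    (Units.inv_mul (γ x))
    (Units.inv_mul (u x))
    (hrel v)
  rw [show (((γ x)⁻¹ * u x : GL (Fin n) ℝ) : M)
      = (((γ x)⁻¹ : GL (Fin n) ℝ) : M) * (u x : M) from rfl]
  rw [← hprod v] at this
  exact this

end
end

section
/- Let m be a positive integer and η = diag(1, −1, …, −1) ∈ Mₘ(ℝ); for a row vector q ∈ ℝ^{1×m} set q^t := η⁻¹qᵀ and k₁(q) := [[1, q, ½ q q^t],[0, 1ₘ, q^t],[0, 0, 1]] (blocks of sizes (1, m, 1)). Let S ∈ Mₘ(ℝ) satisfy SᵀηS = η (so S is invertible). Then blockdiag(1, S, 1)⁻¹ · k₁(q) · blockdiag(1, S, 1) = k₁(qS). That is, conjugating the dressing field u₁ = k₁(q) by a Lorentz transformation S yields the dressing field with covector q replaced by qS; equivalently, u₁ transforms under the Lorentz group by a gauge-like conjugation. -/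
open Matrix

lemma B3_mul {R : Type*} [CommRing R] {m : ℕ}
    (a11 : Matrix (Fin 1) (Fin 1) R) (a12 : Matrix (Fin 1) (Fin m) R) (a13 : Matrix (Fin 1) (Fin 1) R)
    (a21 : Matrix (Fin m) (Fin 1) R) (a22 : Matrix (Fin m) (Fin m) R) (a23 : Matrix (Fin m) (Fin 1) R)
    (a31 : Matrix (Fin 1) (Fin 1) R) (a32 : Matrix (Fin 1) (Fin m) R) (a33 : Matrix (Fin 1) (Fin 1) R)
    (b11 : Matrix (Fin 1) (Fin 1) R) (b12 : Matrix (Fin 1) (Fin m) R) (b13 : Matrix (Fin 1) (Fin 1) R)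
    (b21 : Matrix (Fin m) (Fin 1) R) (b22 : Matrix (Fin m) (Fin m) R) (b23 : Matrix (Fin m) (Fin 1) R)
    (b31 : Matrix (Fin 1) (Fin 1) R) (b32 : Matrix (Fin 1) (Fin m) R) (b33 : Matrix (Fin 1) (Fin 1) R) :
    Matrix.fromBlocks a11 (Matrix.fromCols a12 a13) (Matrix.fromRows a21 a31)
      (Matrix.fromBlocks a22 a23 a32 a33) *
    Matrix.fromBlocks b11 (Matrix.fromCols b12 b13) (Matrix.fromRows b21 b31)
      (Matrix.fromBlocks b22 b23 b32 b33) =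
    Matrix.fromBlocks (a11*b11 + a12*b21 + a13*b31)
      (Matrix.fromCols (a11*b12 + a12*b22 + a13*b32) (a11*b13 + a12*b23 + a13*b33))
      (Matrix.fromRows (a21*b11 + a22*b21 + a23*b31) (a31*b11 + a32*b21 + a33*b31))
      (Matrix.fromBlocks (a21*b12 + a22*b22 + a23*b32) (a21*b13 + a22*b23 + a23*b33)
        (a31*b12 + a32*b22 + a33*b32) (a31*b13 + a32*b23 + a33*b33)) := by
  ext (i | j | k) (i' | j' | k') <;>
    simp [Matrix.mul_apply, Fintype.sum_sum_type, Matrix.fromBlocks, Matrix.fromCols,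
      Matrix.fromRows_apply_inl, Matrix.fromRows_apply_inr, add_assoc]

/-- 3×3 block matrix with block sizes (1, m, 1). -/
def B3 {R : Type*} {m : ℕ}
    (a11 : Matrix (Fin 1) (Fin 1) R) (a12 : Matrix (Fin 1) (Fin m) R) (a13 : Matrix (Fin 1) (Fin 1) R)
    (a21 : Matrix (Fin m) (Fin 1) R) (a22 : Matrix (Fin m) (Fin m) R) (a23 : Matrix (Fin m) (Fin 1) R)
    (a31 : Matrix (Fin 1) (Fin 1) R) (a32 : Matrix (Fin 1) (Fin m) R) (a33 : Matrix (Fin 1) (Fin 1) R) :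
    Matrix (Fin 1 ⊕ (Fin m ⊕ Fin 1)) (Fin 1 ⊕ (Fin m ⊕ Fin 1)) R :=
  Matrix.fromBlocks a11 (Matrix.fromCols a12 a13) (Matrix.fromRows a21 a31)
    (Matrix.fromBlocks a22 a23 a32 a33)

/-- The Minkowski matrix `diag(1, −1, …, −1)` of signature `(1, m−1)`. -/
def Mink (m : ℕ) : Matrix (Fin m) (Fin m) ℝ :=
  Matrix.diagonal fun i => if (i : ℕ) = 0 then 1 else -1

/-- For a row vector `r`, the column vector `r^t := η⁻¹ rᵀ`. -/
noncomputable def rT {m : ℕ} (r : Matrix (Fin 1) (Fin m) ℝ) : Matrix (Fin m) (Fin 1) ℝ :=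
  (Mink m)⁻¹ * r.transpose

/-- The special conformal (inversion) group element
`k₁(r) = [[1, r, ½ r r^t],[0, 1ₘ, r^t],[0, 0, 1]]`. -/
noncomputable def k1 {m : ℕ} (r : Matrix (Fin 1) (Fin m) ℝ) :
    Matrix (Fin 1 ⊕ (Fin m ⊕ Fin 1)) (Fin 1 ⊕ (Fin m ⊕ Fin 1)) ℝ :=
  B3 1 r ((2⁻¹ : ℝ) • (r * rT r)) 0 1 (rT r) 0 0 1

/-- Conjugating the dressing field `u₁ = k₁(q)` by a Lorentz transformation
`blockdiag(1, S, 1)` (with `Sᵀ η S = η`) yields `k₁(qS)`. -/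
theorem stmt_6 (m : ℕ) (hm : 0 < m)
    (S : Matrix (Fin m) (Fin m) ℝ) (hS : S.transpose * Mink m * S = Mink m)
    (q : Matrix (Fin 1) (Fin m) ℝ) :
    (B3 1 0 0 0 S 0 0 0 1)⁻¹ * k1 q * B3 1 0 0 0 S 0 0 0 1 = k1 (q * S) := by
  have hMM : Mink m * Mink m = 1 := by
    have hfun : (fun i : Fin m => (if (i : ℕ) = 0 then (1:ℝ) else -1) *
        (if (i : ℕ) = 0 then (1:ℝ) else -1)) = fun _ => 1 := by
      funext i; split <;> norm_num
    rw [Mink, diagonal_mul_diagonal, hfun, Matrix.diagonal_one]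
  have hMinv : (Mink m)⁻¹ = Mink m := Matrix.inv_eq_right_inv hMM
  set T : Matrix (Fin m) (Fin m) ℝ := Mink m * S.transpose * Mink m with hT
  have hleft : T * S = 1 := by
    rw [hT, Matrix.mul_assoc (Mink m * S.transpose) (Mink m) S,
      Matrix.mul_assoc (Mink m) S.transpose (Mink m * S),
      ← Matrix.mul_assoc S.transpose (Mink m) S, hS, hMM]
  have hright : S * T = 1 := mul_eq_one_comm.mp hleft
  have hrT : rT (q * S) = T * rT q := by
    rw [rT, rT, hMinv, Matrix.transpose_mul, hT,
      Matrix.mul_assoc (Mink m * S.transpose), ← Matrix.mul_assoc (Mink m) (Mink m), hMM,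
      Matrix.one_mul, Matrix.mul_assoc]
  have hqq : (q * S) * rT (q * S) = q * rT q := by
    rw [hrT, Matrix.mul_assoc, ← Matrix.mul_assoc S, hright, Matrix.one_mul]
  have hDE : B3 1 0 0 0 S 0 0 0 (1 : Matrix (Fin 1) (Fin 1) ℝ) * B3 1 0 0 0 T 0 0 0 1 = 1 := by
    rw [B3, B3, B3_mul]
    simp [hright, Matrix.fromBlocks_one]
  have hinv : (B3 1 0 0 0 S 0 0 0 (1 : Matrix (Fin 1) (Fin 1) ℝ))⁻¹ = B3 1 0 0 0 T 0 0 0 1 :=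
    Matrix.inv_eq_right_inv hDE
  have hqq' : q * S * (T * rT q) = q * rT q := by rw [← hrT]; exact hqq
  rw [hinv, k1, k1, B3, B3, B3, B3, B3_mul, B3_mul]
  simp [hleft, hrT, hqq', Matrix.mul_smul]
end
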